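/- Let a, β, γ, κ, θ, q > 0 and b ≥ 0 satisfy a < βγθ/κ < a + b. Then there exists x̄ ∈ (b/β, (a+b)/β) such that, with ȳ = (κ/γ)x̄, one has b + a·ȳ^{1/q}/(ȳ^{1/q} + θ^{1/q}) = βx̄; that is, (x̄, ȳ) is an equilibrium of the planar system ẋ = b + a·H(y, θ, q) − βx, ẏ = κx − γy. -/

import Mathlib

/-- The Hill function H(y, θ, q) = y^(1/q) / (y^(1/q) + θ^(1/q)) (real powers). -/
noncomputable def hill (y θ q : ℝ) : ℝ :=
  y ^ (1 / q) / (y ^ (1 / q) + θ ^ (1 / q))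

lemma hill_pos {y θ q : ℝ} (hy : 0 < y) (hθ : 0 < θ) : 0 < hill y θ q := by
  have h1 : 0 < y ^ (1 / q) := Real.rpow_pos_of_pos hy _
  have h2 : 0 < θ ^ (1 / q) := Real.rpow_pos_of_pos hθ _
  exact div_pos h1 (by linarith)

lemma hill_lt_one {y θ q : ℝ} (hy : 0 < y) (hθ : 0 < θ) : hill y θ q < 1 := by
  have h1 : 0 < y ^ (1 / q) := Real.rpow_pos_of_pos hy _
  have h2 : 0 < θ ^ (1 / q) := Real.rpow_pos_of_pos hθ _
  rw [hill, div_lt_one (by linarith)]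
  linarith

/-- if a < βγθ/κ < a + b, then there is an equilibrium (x̄, ȳ) of the
self-regulation system ẋ = b + a·H(y, θ, q) − βx, ẏ = κx − γy, with
x̄ ∈ (b/β, (a+b)/β) and ȳ = (κ/γ)x̄. -/
theorem exists_equilibrium_near_threshold
    (a b β γ κ θ q : ℝ)
    (ha : 0 < a) (hb : 0 ≤ b) (hβ : 0 < β) (hγ : 0 < γ) (hκ : 0 < κ)
    (hθ : 0 < θ) (hq : 0 < q)
    (h1 : a < β * γ * θ / κ) (h2 : β * γ * θ / κ < a + b) :
    ∃ xbar ∈ Set.Ioo (b / β) ((a + b) / β),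
      b + a * hill (κ / γ * xbar) θ q = β * xbar := by
  have hbpos : 0 < b := by linarith [lt_trans h1 h2]
  set lo := b / β with hlo
  set hi := (a + b) / β with hhi
  have hlopos : 0 < lo := div_pos hbpos hβ
  have hlohi : lo < hi := by
    rw [hlo, hhi, div_lt_div_iff₀ hβ hβ]
    nlinarith
  set g : ℝ → ℝ := fun x => b + a * hill (κ / γ * x) θ q - β * x with hg
  have hypos : ∀ x ∈ Set.Icc lo hi, 0 < κ / γ * x := by
    intro x hx
    have : 0 < x := lt_of_lt_of_le hlopos hx.1
    positivity
  have hcont : ContinuousOn g (Set.Icc lo hi) := by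
    apply ContinuousOn.sub _ (continuousOn_const.mul continuousOn_id)
    apply ContinuousOn.add continuousOn_const
    apply ContinuousOn.mul continuousOn_const
    unfold hill
    apply ContinuousOn.div
    · exact (continuousOn_const.mul continuousOn_id).rpow_const
        (fun x _ => Or.inr (by positivity))
    · exact ((continuousOn_const.mul continuousOn_id).rpow_const
        (fun x _ => Or.inr (by positivity))).add continuousOn_const
    · intro x hx
      have h1 : 0 < (κ / γ * x) ^ (1 / q) := Real.rpow_pos_of_pos (hypos x hx) _
      have h2 : 0 < θ ^ (1 / q) := Real.rpow_pos_of_pos hθ _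
      positivity
  have hβlo : β * lo = b := by rw [hlo]; field_simp
  have hβhi : β * hi = a + b := by rw [hhi]; field_simp
  have hglo : 0 < g lo := by
    have hy : 0 < κ / γ * lo := by positivity
    have := hill_pos (q := q) hy hθ
    simp only [hg]
    nlinarith
  have hghi : g hi < 0 := by
    have hy : 0 < κ / γ * hi := by positivity
    have := hill_lt_one (q := q) hy hθ
    simp only [hg]
    nlinarith
  have hsub := intermediate_value_Ioo' (le_of_lt hlohi) hcont
  have h0 : (0 : ℝ) ∈ Set.Ioo (g hi) (g lo) := ⟨hghi, hglo⟩
  obtain ⟨x, hx, hgx⟩ := hsub h0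
  exact ⟨x, hx, by simp only [hg] at hgx; linarith⟩
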